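/- For the q = 3 model with J₀ = J₂ = 0 and J₁ = J (transfer matrix with rows (1, y, y²), (y, xy², y³), (y², y³, y⁴), largest eigenvalue λ = ½[(y⁴ + xy² + 1) + √Δ], Δ = 4y² + 2y⁴ + 4y⁶ + y⁸ - 2xy² - 2xy⁶ + x²y⁴ + 1), the per capita investment l(β) = -(1/(βλ))·(∂λ/∂y)·(∂y/∂D) evaluated at D = 0 equals 1 for all β and all J. -/

import Mathlib

open Real

/-- The largest eigenvalue of the `q = 3` transfer matrix with `J₀ = J₂ = 0`,
`J₁ = J`, as a function of `x = e^{-βJ}` and `y = e^{-βD/2}`: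
`λ = ½[(y⁴ + xy² + 1) + √Δ]` with
`Δ = 4y² + 2y⁴ + 4y⁶ + y⁸ - 2xy² - 2xy⁶ + x²y⁴ + 1`. -/
noncomputable def q3LamCase2 (x y : ℝ) : ℝ :=
  (1 / 2) * ((y ^ 4 + x * y ^ 2 + 1) +
    Real.sqrt (4 * y ^ 2 + 2 * y ^ 4 + 4 * y ^ 6 + y ^ 8 - 2 * x * y ^ 2
      - 2 * x * y ^ 6 + x ^ 2 * y ^ 4 + 1))

lemma q3_inner_hasDerivAt (x : ℝ) :
    HasDerivAt (fun y : ℝ => 4 * y ^ 2 + 2 * y ^ 4 + 4 * y ^ 6 + y ^ 8 - 2 * x * y ^ 2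
      - 2 * x * y ^ 6 + x ^ 2 * y ^ 4 + 1) (48 - 16 * x + 4 * x ^ 2) 1 := by
  have h2 := hasDerivAt_pow 2 (1 : ℝ)
  have h4 := hasDerivAt_pow 4 (1 : ℝ)
  have h6 := hasDerivAt_pow 6 (1 : ℝ)
  have h8 := hasDerivAt_pow 8 (1 : ℝ)
  have := (((((((h2.const_mul 4).add (h4.const_mul 2)).add (h6.const_mul 4)).add
      h8).sub (h2.const_mul (2 * x))).sub (h6.const_mul (2 * x))).add
      (h4.const_mul (x ^ 2))).add_const 1
  refine this.congr_deriv ?_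
  push_cast
  ring

lemma q3_deriv_at_one (x : ℝ) (hx : 0 < x) :
    HasDerivAt (q3LamCase2 x)
      ((1 / 2) * ((4 + 2 * x) +
        (48 - 16 * x + 4 * x ^ 2) / (2 * Real.sqrt (x ^ 2 - 4 * x + 12)))) 1 := by
  have hΔpos : (0 : ℝ) < x ^ 2 - 4 * x + 12 := by nlinarith [sq_nonneg (x - 2)]
  have hinner := q3_inner_hasDerivAt x
  have hval : (4 * (1:ℝ) ^ 2 + 2 * 1 ^ 4 + 4 * 1 ^ 6 + 1 ^ 8 - 2 * x * 1 ^ 2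
      - 2 * x * 1 ^ 6 + x ^ 2 * 1 ^ 4 + 1) = x ^ 2 - 4 * x + 12 := by ring
  have hne : (4 * (1:ℝ) ^ 2 + 2 * 1 ^ 4 + 4 * 1 ^ 6 + 1 ^ 8 - 2 * x * 1 ^ 2
      - 2 * x * 1 ^ 6 + x ^ 2 * 1 ^ 4 + 1) ≠ 0 := by rw [hval]; exact ne_of_gt hΔpos
  have hsqrt := hinner.sqrt hne
  have h2 := hasDerivAt_pow 2 (1 : ℝ)
  have h4 := hasDerivAt_pow 4 (1 : ℝ)
  have hpoly := ((h4.add (h2.const_mul x)).add_const 1)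
  have := (hpoly.add hsqrt).const_mul (1 / 2 : ℝ)
  unfold q3LamCase2
  refine this.congr_deriv ?_
  rw [hval]
  norm_num
  ring

/-- For the `q = 3` model with `J₀ = J₂ = 0`, `J₁ = J`, the per capita investment
`l(β) = -(1/(βλ))·(∂λ/∂y)·(∂y/∂D)|_{D=0}` equals `1` for all `β ≠ 0` and all `J`
(here `y = e^{-βD/2}` so `∂y/∂D|_{D=0} = -β/2`, and `y = 1` at `D = 0`). -/
theorem q3_case2_investment_is_one (β J : ℝ) (hβ : β ≠ 0) :
    -(1 / (β * q3LamCase2 (exp (-β * J)) 1)) *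
      (deriv (q3LamCase2 (exp (-β * J))) 1 * (-(β / 2))) = 1 := by
  set x := exp (-β * J) with hxdef
  have hx : 0 < x := exp_pos _
  have hΔpos : (0 : ℝ) < x ^ 2 - 4 * x + 12 := by nlinarith [sq_nonneg (x - 2)]
  set s := Real.sqrt (x ^ 2 - 4 * x + 12) with hsdef
  have hs : 0 < s := Real.sqrt_pos.mpr hΔpos
  have hs2 : s ^ 2 = x ^ 2 - 4 * x + 12 := Real.sq_sqrt hΔpos.le
  have hderiv : deriv (q3LamCase2 x) 1 =
      (1 / 2) * ((4 + 2 * x) + (48 - 16 * x + 4 * x ^ 2) / (2 * s)) :=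
    (q3_deriv_at_one x hx).deriv
  have hlam : q3LamCase2 x 1 = (1 / 2) * ((2 + x) + s) := by
    unfold q3LamCase2
    rw [hsdef]
    norm_num
    rw [show (11 - 2*x - 2*x + x^2 + 1 : ℝ) = x^2 - 4*x + 12 by ring]
    ring
  have hlampos : 0 < q3LamCase2 x 1 := by rw [hlam]; positivity
  have hfrac : (48 - 16 * x + 4 * x ^ 2) / (2 * s) = 2 * s := by
    rw [div_eq_iff (by positivity : (2:ℝ) * s ≠ 0)]
    nlinarith [hs2]
  have hD : deriv (q3LamCase2 x) 1 = 2 + x + s := by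
    rw [hderiv, hfrac]; ring
  rw [hD, hlam]
  have h1 : (0:ℝ) < 2 + x + s := by positivity
  field_simp
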